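/- Let σ > 1 and 0 < t < 1 with t = xσ. Then A² := ∑_{i=0}^{n-1} t^{2i} - ∑_{i=0}^{n-1}∑_{j=0,j≠i}^{n-1} ρ^{|i-j|} t^{i+j} satisfies A² ≥ (1 - 2ρt/(1-ρt)) · (1 - t^{2n})/(1 - t²); in particular if additionally 3ρt < 1 then A² ≥ ((1-3ρt)/(1-ρt)) · (1 - t^{2n})/(1 - t²) > 0. -/

import Mathlib

open Finset

/-- lower bound for `A² = ∑ t^{2i} - ∑_{i≠j} ρ^{|i-j|} t^{i+j}`
where `t = xσ`. -/
theorem A_sq_lower_bound (n : ℕ) (hn : 1 ≤ n) (σ x t ρ : ℝ) (hσ : 1 < σ)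
    (htx : t = x * σ) (ht0 : 0 < t) (ht1 : t < 1) (hρ0 : 0 < ρ) (hρ : ρ < 1 / 3) :
    ((∑ i ∈ Finset.range n, t ^ (2 * i))
        - ∑ i ∈ Finset.range n, ∑ j ∈ Finset.range n,
            (if j ≠ i then ρ ^ (((i : ℤ) - (j : ℤ)).natAbs) * t ^ (i + j) else 0))
      ≥ (1 - 2 * ρ * t / (1 - ρ * t)) * (1 - t ^ (2 * n)) / (1 - t ^ 2)
    ∧ (3 * ρ * t < 1 →
        ((∑ i ∈ Finset.range n, t ^ (2 * i))
            - ∑ i ∈ Finset.range n, ∑ j ∈ Finset.range n,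
                (if j ≠ i then ρ ^ (((i : ℤ) - (j : ℤ)).natAbs) * t ^ (i + j) else 0))
          ≥ ((1 - 3 * ρ * t) / (1 - ρ * t)) * (1 - t ^ (2 * n)) / (1 - t ^ 2)
        ∧ 0 < ((1 - 3 * ρ * t) / (1 - ρ * t)) * (1 - t ^ (2 * n)) / (1 - t ^ 2)) := by
  have hr0 : 0 < ρ * t := mul_pos hρ0 ht0
  have hr1 : ρ * t < 1 / 3 := by nlinarith
  have h1r : 0 < 1 - ρ * t := by linarith
  have ht2 : 0 < 1 - t ^ 2 := by nlinarith
  have hSeq : ∑ i ∈ Finset.range n, t ^ (2 * i) = (1 - t ^ (2 * n)) / (1 - t ^ 2) := by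
    have h1 : ∀ m, t ^ (2 * m) = (t ^ 2) ^ m := fun m => by rw [← pow_mul]
    simp only [h1]
    rw [geom_sum_eq (by nlinarith : t ^ 2 ≠ 1)]
    rw [div_eq_div_iff (by nlinarith) (by nlinarith)]
    ring
  set g : ℕ → ℕ → ℝ := fun i j => if j < i then (ρ * t) ^ (i - j) * t ^ (2 * j) else 0 with hg
  have hsplit : ∀ i j : ℕ, (if j ≠ i then ρ ^ (((i : ℤ) - (j : ℤ)).natAbs) * t ^ (i + j) else 0)
      = g i j + g j i := by
    intro i j
    rcases lt_trichotomy i j with h | h | h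
    · rw [if_pos (by omega : j ≠ i), hg]
      simp only
      rw [if_neg (by omega : ¬ j < i), if_pos h]
      have h1 : ((i : ℤ) - (j : ℤ)).natAbs = j - i := by omega
      have h2 : t ^ (i + j) = t ^ (j - i) * t ^ (2 * i) := by
        rw [← pow_add]; congr 1; omega
      rw [h1, h2, mul_pow]; ring
    · rw [if_neg (by omega : ¬ j ≠ i), hg]
      simp only
      rw [if_neg (by omega : ¬ j < i), if_neg (by omega : ¬ i < j)]
      ring
    · rw [if_pos (by omega : j ≠ i), hg]
      simp only
      rw [if_pos h, if_neg (by omega : ¬ i < j)]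
      have h1 : ((i : ℤ) - (j : ℤ)).natAbs = i - j := by omega
      have h2 : t ^ (i + j) = t ^ (i - j) * t ^ (2 * j) := by
        rw [← pow_add]; congr 1; omega
      rw [h1, h2, mul_pow]; ring
  have hinner : ∀ j : ℕ, ∑ i ∈ Finset.range n, g i j
      ≤ (ρ * t) / (1 - ρ * t) * t ^ (2 * j) := by
    intro j
    have e1 : ∑ i ∈ Finset.range n, g i j
        = ∑ i ∈ Finset.Ico (j + 1) n, (ρ * t) ^ (i - j) * t ^ (2 * j) := by
      rw [hg]
      simp only
      rw [← Finset.sum_filter]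
      congr 1
      ext i
      simp only [Finset.mem_filter, Finset.mem_range, Finset.mem_Ico]
      omega
    rw [e1, Finset.sum_Ico_eq_sum_range]
    have e2 : ∀ k, (ρ * t) ^ (j + 1 + k - j) * t ^ (2 * j)
        = (ρ * t) ^ k * ((ρ * t) * t ^ (2 * j)) := by
      intro k
      have : j + 1 + k - j = k + 1 := by omega
      rw [this, pow_succ]; ring
    simp only [e2]
    rw [← Finset.sum_mul]
    have hgeom : ∑ k ∈ Finset.range (n - (j + 1)), (ρ * t) ^ k ≤ 1 / (1 - ρ * t) := by
      rw [geom_sum_eq (by nlinarith : ρ * t ≠ 1)]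
      have e : ((ρ * t) ^ (n - (j + 1)) - 1) / (ρ * t - 1)
          = (1 - (ρ * t) ^ (n - (j + 1))) / (1 - ρ * t) := by
        rw [div_eq_div_iff (by nlinarith) (by nlinarith)]; ring
      rw [e, div_le_div_iff₀ h1r h1r]
      have : 0 ≤ (ρ * t) ^ (n - (j + 1)) := by positivity
      nlinarith
    have hpos : 0 ≤ ρ * t * t ^ (2 * j) := by positivity
    calc (∑ k ∈ Finset.range (n - (j + 1)), (ρ * t) ^ k) * (ρ * t * t ^ (2 * j))
        ≤ (1 / (1 - ρ * t)) * (ρ * t * t ^ (2 * j)) :=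
          mul_le_mul_of_nonneg_right hgeom hpos
      _ = (ρ * t) / (1 - ρ * t) * t ^ (2 * j) := by ring
  have key : (∑ i ∈ Finset.range n, ∑ j ∈ Finset.range n,
        (if j ≠ i then ρ ^ (((i : ℤ) - (j : ℤ)).natAbs) * t ^ (i + j) else 0))
      ≤ 2 * (ρ * t) / (1 - ρ * t) * ∑ i ∈ Finset.range n, t ^ (2 * i) := by
    have hd : (∑ i ∈ Finset.range n, ∑ j ∈ Finset.range n,
          (if j ≠ i then ρ ^ (((i : ℤ) - (j : ℤ)).natAbs) * t ^ (i + j) else 0))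
        = 2 * ∑ j ∈ Finset.range n, ∑ i ∈ Finset.range n, g i j := by
      simp only [hsplit, Finset.sum_add_distrib]
      rw [Finset.sum_comm (f := fun i j => g j i)]
      rw [Finset.sum_comm (f := fun i j => g i j)]
      ring
    rw [hd]
    have h2 : ∑ j ∈ Finset.range n, ∑ i ∈ Finset.range n, g i j
        ≤ (ρ * t) / (1 - ρ * t) * ∑ j ∈ Finset.range n, t ^ (2 * j) := by
      rw [Finset.mul_sum]
      exact Finset.sum_le_sum fun j _ => hinner j
    have e : 2 * (ρ * t) / (1 - ρ * t) * ∑ i ∈ Finset.range n, t ^ (2 * i)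
        = 2 * ((ρ * t) / (1 - ρ * t) * ∑ i ∈ Finset.range n, t ^ (2 * i)) := by ring
    rw [e]
    linarith
  have hcoef1 : (1 - 2 * ρ * t / (1 - ρ * t)) * (1 - t ^ (2 * n)) / (1 - t ^ 2)
      = (1 - 2 * (ρ * t) / (1 - ρ * t)) * ((1 - t ^ (2 * n)) / (1 - t ^ 2)) := by
    ring
  have part1 : (∑ i ∈ Finset.range n, t ^ (2 * i))
        - (∑ i ∈ Finset.range n, ∑ j ∈ Finset.range n,
            (if j ≠ i then ρ ^ (((i : ℤ) - (j : ℤ)).natAbs) * t ^ (i + j) else 0))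
      ≥ (1 - 2 * ρ * t / (1 - ρ * t)) * (1 - t ^ (2 * n)) / (1 - t ^ 2) := by
    rw [hcoef1, ← hSeq]
    have : (1 - 2 * (ρ * t) / (1 - ρ * t)) * (∑ i ∈ Finset.range n, t ^ (2 * i))
        = (∑ i ∈ Finset.range n, t ^ (2 * i))
          - 2 * (ρ * t) / (1 - ρ * t) * ∑ i ∈ Finset.range n, t ^ (2 * i) := by ring
    rw [this]
    linarith
  refine ⟨part1, fun h3 => ?_⟩
  have hcoef2 : ((1 - 3 * ρ * t) / (1 - ρ * t)) * (1 - t ^ (2 * n)) / (1 - t ^ 2)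
      = (1 - 2 * ρ * t / (1 - ρ * t)) * (1 - t ^ (2 * n)) / (1 - t ^ 2) := by
    have e : (1 - 3 * ρ * t) / (1 - ρ * t) = 1 - 2 * ρ * t / (1 - ρ * t) := by
      rw [eq_sub_iff_add_eq, ← add_div, div_eq_one_iff_eq h1r.ne']
      ring
    rw [e]
  constructor
  · rw [hcoef2]; exact part1
  · have htn : t ^ (2 * n) < 1 := pow_lt_one₀ (le_of_lt ht0) ht1 (by omega)
    have := div_pos (by linarith : (0:ℝ) < 1 - 3 * ρ * t) h1r
    have := mul_pos this (by linarith : (0:ℝ) < 1 - t ^ (2 * n))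
    exact div_pos this ht2
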